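/- Let q = 2^m with m a positive integer and let K be a finite field with q^3 elements. Let A, B ∈ K be nonzero with A^q·B = 1 and A^(1+q+q^2) = 1. Then f_{A,B}(x) = x^(q^2−q+1) + A·x^(q^2) + B·x is not a bijection of K. -/

import Mathlib

open Polynomial

-- number of solutions of y^n = y in a field is at most n (for n ≥ 2)
lemma aux_card_fixed {K : Type*} [Field K] [Fintype K] [DecidableEq K] (n : ℕ) (hn : 2 ≤ n) :
    (Finset.univ.filter fun y : K => y ^ n = y).card ≤ n := by
  have hdeg : ((X : K[X]) ^ n - X).natDegree = n := by
    rw [natDegree_sub_eq_left_of_natDegree_lt, natDegree_X_pow]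
    rw [natDegree_X, natDegree_X_pow]; omega
  have hne : ((X : K[X]) ^ n - X) ≠ 0 := fun h => by
    rw [h, natDegree_zero] at hdeg; omega
  calc (Finset.univ.filter fun y : K => y ^ n = y).card
      ≤ ((X : K[X]) ^ n - X).natDegree := by
        apply card_le_degree_of_subset_roots
        intro y hy
        simp only [Finset.mem_val, Finset.mem_filter, Finset.mem_univ, true_and] at hy
        rw [mem_roots hne]
        simp [IsRoot, sub_eq_zero, hy]
    _ = n := hdeg

-- same for y^n = 1 (n ≥ 1)
lemma aux_card_root1 {K : Type*} [Field K] [Fintype K] [DecidableEq K] (n : ℕ) (hn : 1 ≤ n) :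
    (Finset.univ.filter fun y : K => y ^ n = 1).card ≤ n := by
  have hdeg : ((X : K[X]) ^ n - 1).natDegree = n := by
    rw [natDegree_sub_eq_left_of_natDegree_lt, natDegree_X_pow]
    rw [natDegree_one, natDegree_X_pow]; omega
  have hne : ((X : K[X]) ^ n - 1) ≠ 0 := fun h => by
    rw [h, natDegree_zero] at hdeg; omega
  calc (Finset.univ.filter fun y : K => y ^ n = 1).card
      ≤ ((X : K[X]) ^ n - 1).natDegree := by
        apply card_le_degree_of_subset_roots
        intro y hy
        simp only [Finset.mem_val, Finset.mem_filter, Finset.mem_univ, true_and] at hy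
        rw [mem_roots hne]
        simp [IsRoot, sub_eq_zero, hy]
    _ = n := hdeg

theorem stmt_5 (m : ℕ) (hm : 1 ≤ m) (q : ℕ) (hq : q = 2 ^ m)
    (K : Type*) [Field K] [Fintype K] (hK : Fintype.card K = q ^ 3)
    (A B : K) (hA : A ≠ 0) (hB : B ≠ 0)
    (h1 : A ^ q * B = 1) (h2 : A ^ (1 + q + q ^ 2) = 1) :
    ¬ Function.Bijective (fun x : K => x ^ (q ^ 2 - q + 1) + A * x ^ (q ^ 2) + B * x) := by
  classical
  have hq2 : 2 ≤ q := by
    subst hq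
    calc 2 = 2 ^ 1 := (pow_one 2).symm
    _ ≤ 2 ^ m := Nat.pow_le_pow_right (by norm_num) hm
  -- characteristic 2
  have hchar : ringChar K = 2 := by
    haveI := ringChar.charP K
    obtain ⟨n, hp, hcard⟩ := FiniteField.card K (ringChar K)
    rw [hK, hq] at hcard
    have h2dvd : ringChar K ∣ 2 := by
      have hd : ringChar K ∣ 2 ^ (m * 3) := by
        rw [← pow_mul] at hcard
        rw [hcard]
        exact dvd_pow_self _ (by exact_mod_cast n.pos.ne')
      exact hp.dvd_of_dvd_pow hd
    exact (Nat.prime_dvd_prime_iff_eq hp Nat.prime_two).mp h2dvd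
  haveI hK2 : CharP K 2 := hchar ▸ ringChar.charP K
  haveI : Fact (Nat.Prime 2) := ⟨Nat.prime_two⟩
  -- Frobenius additivity
  have frob : ∀ x y : K, (x + y) ^ q = x ^ q + y ^ q := by
    intro x y; rw [hq]; exact add_pow_char_pow x y 2 m
  have hpow3 : ∀ x : K, (x ^ q) ^ q ^ 2 = x := by
    intro x
    rw [← pow_mul, show q * q ^ 2 = q ^ 3 by ring, ← hK, FiniteField.pow_card]
  have hpow3' : ∀ x : K, x ^ q ^ 3 = x := by
    intro x; rw [← hK, FiniteField.pow_card]
  -- get α with α^{q^2} + α^q + α = 0 and α^q ≠ α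
  obtain ⟨α, hα1, hα2⟩ : ∃ α : K, α ^ q ^ 2 + α ^ q + α = 0 ∧ α ^ q ≠ α := by
    by_contra hcon
    push_neg at hcon
    set L : K →+ K :=
      { toFun := fun x => x ^ q ^ 2 + x ^ q + x
        map_zero' := by simp [zero_pow (show q ≠ 0 by omega), zero_pow (show q ^ 2 ≠ 0 by positivity)]
        map_add' := by
          intro x y
          show (x + y) ^ q ^ 2 + (x + y) ^ q + (x + y) = _
          have e1 : (x + y) ^ q ^ 2 = x ^ q ^ 2 + y ^ q ^ 2 := by
            rw [show q ^ 2 = q * q by ring, pow_mul, pow_mul, pow_mul, frob x y, frob]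
          rw [e1, frob]; ring } with hL
    have hrange : ∀ x : K, (L x) ^ q = L x := by
      intro x
      show ((x ^ q ^ 2 + x ^ q + x) : K) ^ q = _
      rw [frob, frob, show (x ^ q ^ 2) ^ q = x ^ q ^ 3 by rw [← pow_mul]; ring_nf,
        hpow3', show (x ^ q) ^ q = x ^ q ^ 2 by rw [← pow_mul]; ring_nf]
      show _ = x ^ q ^ 2 + x ^ q + x
      ring
    -- cardinalities
    have hSle : ∀ (P : K → Prop) (_ : ∀ x, P x → x ^ q = x), Nat.card {x : K // P x} ≤ q := by
      intro P hP
      rw [Nat.card_eq_fintype_card, Fintype.card_subtype]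
      calc (Finset.univ.filter fun y : K => P y).card
          ≤ (Finset.univ.filter fun y : K => y ^ q = y).card := by
            apply Finset.card_le_card
            intro y hy
            simp only [Finset.mem_filter, Finset.mem_univ, true_and] at *
            exact hP y hy
        _ ≤ q := aux_card_fixed q hq2
    have hker : Nat.card L.ker ≤ q := by
      have := hSle (fun x => x ∈ L.ker) (fun x hx => hcon x hx)
      exact this
    have hran : Nat.card L.range ≤ q := by
      have := hSle (fun x => x ∈ L.range) ?_
      · exact this
      · rintro x ⟨y, rfl⟩
        exact hrange y
    have hq3 : Nat.card K = q ^ 3 := by rw [Nat.card_eq_fintype_card, hK]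
    have heq : Nat.card K = Nat.card (K ⧸ L.ker) * Nat.card L.ker :=
      AddSubgroup.card_eq_card_quotient_mul_card_addSubgroup L.ker
    have hquot : Nat.card (K ⧸ L.ker) = Nat.card L.range :=
      Nat.card_congr (QuotientAddGroup.quotientKerEquivRange L).toEquiv
    rw [hq3, hquot] at heq
    have : q ^ 3 ≤ q * q := by
      rw [heq]; exact Nat.mul_le_mul hran hker
    nlinarith
  have h2K : (2 : K) = 0 := CharTwo.two_eq_zero
  have hα0 : α ≠ 0 := by
    intro h0; apply hα2; rw [h0, zero_pow (show q ≠ 0 by omega)]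
  set a := α with ha
  set b := α ^ q with hb
  set c := α ^ q ^ 2 with hc
  have ha0 : a ≠ 0 := hα0
  have hb0 : b ≠ 0 := pow_ne_zero _ hα0
  have hcba : c = b + a := by linear_combination hα1 - b * h2K - a * h2K
  have hc0 : c ≠ 0 := by
    rw [hcba]
    intro h
    exact hα2 (by linear_combination h - a * h2K)
  have hbq : b ^ q = c := by rw [hb, hc, ← pow_mul, pow_two]
  have hcq : c ^ q = a := by rw [hc, ha, ← pow_mul, show q ^ 2 * q = q ^ 3 by ring, hpow3']
  -- s and its properties
  set s : K := a / b with hs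
  have hs0 : s ≠ 0 := div_ne_zero ha0 hb0
  have hsq : s ^ q = b / c := by rw [hs, div_pow, ← hb, hbq]
  have hsq2 : s ^ q ^ 2 = c / a := by
    rw [show q ^ 2 = q * q by ring, pow_mul, hsq, div_pow, hbq, hcq]
  have hs2 : s ^ q + s ^ (q + 1) = 1 := by
    have e : s ^ (q + 1) = a / c := by
      rw [pow_succ, hsq, hs]
      field_simp
    rw [hsq, e, ← add_div, ← hcba, div_self hc0]
  have hsnorm : s ^ (q ^ 2 + q + 1) = 1 := by
    rw [pow_add, pow_add, hsq2, hsq, hs]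
    field_simp
  -- t and Hilbert 90
  set t : K := s / A with ht
  have ht0 : t ≠ 0 := div_ne_zero hs0 hA
  have htnorm : t ^ (q ^ 2 + q + 1) = 1 := by
    rw [ht, div_pow, hsnorm, show q ^ 2 + q + 1 = 1 + q + q ^ 2 by ring, h2, div_one]
  obtain ⟨g, hg⟩ := IsCyclic.exists_generator (α := Kˣ)
  have hord : orderOf g = q ^ 3 - 1 := by
    rw [orderOf_eq_card_of_forall_mem_zpowers hg, Nat.card_eq_fintype_card, Fintype.card_units, hK]
  obtain ⟨k, hk⟩ := hg (Units.mk0 t ht0)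
  have hk' : g ^ k = Units.mk0 t ht0 := hk
  have hu1 : (Units.mk0 t ht0) ^ (q ^ 2 + q + 1) = 1 := by
    ext
    push_cast
    exact htnorm
  have hdvd : ((q ^ 3 - 1 : ℕ) : ℤ) ∣ k * ((q ^ 2 + q + 1 : ℕ) : ℤ) := by
    rw [← hord]
    apply orderOf_dvd_iff_zpow_eq_one.mpr
    rw [zpow_mul, hk', zpow_natCast, hu1]
  have hfac : ((q ^ 3 - 1 : ℕ) : ℤ) = ((q : ℤ) - 1) * ((q ^ 2 + q + 1 : ℕ) : ℤ) := by
    have h3 : 1 ≤ q ^ 3 := Nat.one_le_pow _ _ (by omega)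
    rw [Nat.cast_sub h3]
    push_cast
    ring
  obtain ⟨j, hj⟩ : ((q : ℤ) - 1) ∣ k := by
    rw [hfac] at hdvd
    have hne : ((q ^ 2 + q + 1 : ℕ) : ℤ) ≠ 0 := Nat.cast_ne_zero.mpr (by positivity)
    rw [mul_comm ((q:ℤ) - 1) _, mul_comm k _] at hdvd
    exact (mul_dvd_mul_iff_left hne).mp hdvd
  have hcast : ((q - 1 : ℕ) : ℤ) = (q : ℤ) - 1 := by omega
  set xu : Kˣ := g ^ j with hxu
  have hxpow : xu ^ (q - 1) = Units.mk0 t ht0 := by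
    rw [← hk', hxu, ← zpow_natCast, ← zpow_mul, hcast]
    rw [hj]
    ring_nf
  set x : K := (xu : K) with hx
  have hx0 : x ≠ 0 := Units.ne_zero xu
  have hxq1 : x ^ (q - 1) = t := by
    rw [hx, ← Units.val_pow_eq_pow_val, hxpow, Units.val_mk0]
  -- final computation
  intro hbij
  have e1 : (q - 1) * q = q ^ 2 - q := by
    rw [Nat.sub_mul, pow_two, one_mul]
  have e2 : (q - 1) * (q + 1) = q ^ 2 - 1 := by
    apply Nat.eq_sub_of_add_eq
    obtain ⟨r, rfl⟩ : ∃ r, q = r + 1 := ⟨q - 1, by omega⟩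
    simp [Nat.add_sub_cancel]
    ring
  have ex1 : x ^ (q ^ 2 - q + 1) = x * t ^ q := by
    rw [← hxq1, ← pow_mul, e1, pow_succ, mul_comm]
  have ex2 : x ^ q ^ 2 = x * t ^ (q + 1) := by
    have h21 : q ^ 2 - 1 + 1 = q ^ 2 := Nat.succ_pred_eq_of_pos (Nat.pow_pos (by omega : 0 < q))
    calc x ^ q ^ 2 = x ^ (q ^ 2 - 1 + 1) := by rw [h21]
    _ = x ^ (q ^ 2 - 1) * x := pow_succ x _
    _ = x * t ^ (q + 1) := by rw [← e2, pow_mul, hxq1, mul_comm]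
  have hB' : B = (A ^ q)⁻¹ := by
    field_simp
    linear_combination h1
  have hAq0 : (A : K) ^ q ≠ 0 := pow_ne_zero _ hA
  have hbr : t ^ q + A * t ^ (q + 1) + B = 0 := by
    have hsA : s ^ q / A ^ q + s ^ (q + 1) / A ^ q + 1 / A ^ q = 0 := by
      rw [← add_div, ← add_div, hs2, one_add_one_eq_two, h2K, zero_div]
    have e : A * (s ^ (q + 1) / (A ^ q * A)) = s ^ (q + 1) / A ^ q := by
      rw [div_mul_eq_div_div, mul_div_assoc', mul_comm, mul_div_assoc, div_self hA, mul_one]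
    rw [hB', ht, div_pow s A q, div_pow s A (q + 1), pow_succ A q, e, inv_eq_one_div]
    exact hsA
  have key : x ^ (q ^ 2 - q + 1) + A * x ^ q ^ 2 + B * x = 0 := by
    rw [ex1, ex2]
    calc x * t ^ q + A * (x * t ^ (q + 1)) + B * x
        = x * (t ^ q + A * t ^ (q + 1) + B) := by ring
    _ = 0 := by rw [hbr, mul_zero]
  have : x = 0 := by
    apply hbij.injective
    show _ = _
    simp only [key]
    rw [zero_pow (by omega : q ^ 2 - q + 1 ≠ 0), zero_pow (by positivity : q ^ 2 ≠ 0)]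
    ring
  exact hx0 this
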